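/- Let x₀ ∈ (0,1) be Q-rational, say x₀ = Σ_{i=1}^n c_i/(q_1⋯q_i) with integers 0 ≤ c_i ≤ q_i − 1 and c_n ≥ 1. Then the one-sided limits of f at x₀ exist and the jump satisfies lim_{x→x₀+} f(x) − lim_{x→x₀−} f(x) = 1/q^n − Σ_{j=n+1}^∞ (q_j − 1)/q^j ≥ 0. Moreover, if in addition q_j ≤ q − 1 for all j > n, then 1/((q−1)q^n) ≤ lim_{x→x₀+} f(x) − lim_{x→x₀−} f(x) ≤ (q−2)/((q−1)q^n), so x₀ is a point of discontinuity of f. -/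

import Mathlib

open Filter Topology MeasureTheory

/-- Product `q_1 ⋯ q_n` of the first `n` bases (0-indexed sequence `a`). -/
noncomputable def cantorProd (a : ℕ → ℕ) (n : ℕ) : ℕ := ∏ j ∈ Finset.range n, a j

/-- The canonical Q-digit of `x` at (0-indexed) position `n`:
`ε_{n+1}(x) = ⌊q_1⋯q_{n+1} x⌋ - q_{n+1} ⌊q_1⋯q_n x⌋`. -/
noncomputable def cantorDigit (a : ℕ → ℕ) (x : ℝ) (n : ℕ) : ℤ :=
  ⌊(cantorProd a (n + 1) : ℝ) * x⌋ - (a n : ℤ) * ⌊(cantorProd a n : ℝ) * x⌋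

/-- The function `f`: for `x < 1`, `f(x) = ∑ ε_n(x)/q^n`; `f(1) = ∑ (q_n - 1)/q^n`. -/
noncomputable def cantorF (a : ℕ → ℕ) (q : ℕ) (x : ℝ) : ℝ :=
  if x < 1 then ∑' n : ℕ, (cantorDigit a x n : ℝ) / (q : ℝ) ^ (n + 1)
  else ∑' n : ℕ, ((a n : ℝ) - 1) / (q : ℝ) ^ (n + 1)

/-- `x ∈ (0,1)` is Q-rational if it is a finite sum `∑_{i=1}^m c_i/(q_1⋯q_i)`
with digits `0 ≤ c_i ≤ q_i - 1`. -/
def QRational (a : ℕ → ℕ) (x : ℝ) : Prop :=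
  x ∈ Set.Ioo (0 : ℝ) 1 ∧
    ∃ m : ℕ, 1 ≤ m ∧ ∃ c : ℕ → ℕ, (∀ i, c i < a i) ∧
      x = ∑ i ∈ Finset.range m, (c i : ℝ) / ∏ j ∈ Finset.range (i + 1), (a j : ℝ)

open Finset

lemma cantorProd_pos {a : ℕ → ℕ} (ha : ∀ j, 2 ≤ a j) (k : ℕ) : 0 < cantorProd a k :=
  Finset.prod_pos fun j _ => lt_of_lt_of_le two_pos (ha j)

lemma cantorProd_real_pos {a : ℕ → ℕ} (ha : ∀ j, 2 ≤ a j) (k : ℕ) :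
    (0:ℝ) < (cantorProd a k : ℝ) := by exact_mod_cast cantorProd_pos ha k

lemma cantorProd_mul {a : ℕ → ℕ} {k N : ℕ} (h : k ≤ N) :
    (cantorProd a N : ℝ) = (cantorProd a k : ℝ) * ∏ j ∈ Ico k N, (a j : ℝ) := by
  unfold cantorProd
  push_cast
  rw [Finset.prod_range_mul_prod_Ico _ h]

lemma Ico_prod_pos {a : ℕ → ℕ} (ha : ∀ j, 2 ≤ a j) (k N : ℕ) :
    (0:ℝ) < ∏ j ∈ Ico k N, (a j : ℝ) :=
  Finset.prod_pos fun j _ => by exact_mod_cast lt_of_lt_of_le two_pos (ha j)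

lemma Ico_prod_ge_one {a : ℕ → ℕ} (ha : ∀ j, 2 ≤ a j) (k N : ℕ) :
    (1:ℝ) ≤ ∏ j ∈ Ico k N, (a j : ℝ) :=
by
  have h : 1 ≤ ∏ j ∈ Ico k N, a j :=
    Finset.one_le_prod' fun j _ => le_trans (by norm_num) (ha j)
  calc (1:ℝ) ≤ ((∏ j ∈ Ico k N, a j : ℕ) : ℝ) := by exact_mod_cast h
    _ = ∏ j ∈ Ico k N, (a j : ℝ) := by push_cast; rfl

lemma cantorDigit_nonneg {a : ℕ → ℕ} (ha : ∀ j, 2 ≤ a j) (x : ℝ) (k : ℕ) :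
    0 ≤ cantorDigit a x k := by
  unfold cantorDigit
  have h1 : (cantorProd a (k+1) : ℝ) = (a k : ℝ) * (cantorProd a k : ℝ) := by
    unfold cantorProd; push_cast; rw [Finset.prod_range_succ]; ring
  rw [h1, mul_assoc, sub_nonneg]
  refine Int.le_floor.mpr ?_
  push_cast
  refine mul_le_mul_of_nonneg_left (Int.floor_le _) ?_
  positivity

lemma cantorDigit_le {a : ℕ → ℕ} (ha : ∀ j, 2 ≤ a j) (x : ℝ) (k : ℕ) :
    cantorDigit a x k ≤ (a k : ℤ) - 1 := by
  unfold cantorDigit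
  have h1 : (cantorProd a (k+1) : ℝ) = (a k : ℝ) * (cantorProd a k : ℝ) := by
    unfold cantorProd; push_cast; rw [Finset.prod_range_succ]; ring
  rw [h1, mul_assoc]
  have hak : (0:ℝ) < (a k : ℝ) := by exact_mod_cast lt_of_lt_of_le two_pos (ha k)
  have : ⌊(a k : ℝ) * ((cantorProd a k : ℝ) * x)⌋ < (a k : ℤ) * ⌊(cantorProd a k : ℝ) * x⌋ + (a k : ℤ) := by
    refine Int.floor_lt.mpr ?_
    push_cast
    have := Int.lt_floor_add_one ((cantorProd a k : ℝ) * x)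
    calc (a k : ℝ) * ((cantorProd a k : ℝ) * x) < (a k : ℝ) * (⌊(cantorProd a k : ℝ) * x⌋ + 1) :=
          by exact mul_lt_mul_of_pos_left this hak
      _ = (a k : ℝ) * ⌊(cantorProd a k : ℝ) * x⌋ + (a k:ℝ) := by ring
  omega

/-- Head: integer part contribution. -/
noncomputable def cH (a : ℕ → ℕ) (n : ℕ) (c : ℕ → ℕ) (k : ℕ) : ℕ :=
  ∑ i ∈ Finset.range (min k n), c i * ∏ j ∈ Finset.Ico (i+1) k, a j

/-- Tail: fractional part contribution. -/
noncomputable def cT (a : ℕ → ℕ) (n : ℕ) (c : ℕ → ℕ) (k : ℕ) : ℝ :=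
  ∑ i ∈ Finset.Ico k n, (c i : ℝ) / ∏ j ∈ Finset.Ico k (i+1), (a j : ℝ)

lemma cantor_decomp {a : ℕ → ℕ} (ha : ∀ j, 2 ≤ a j) {n : ℕ} {c : ℕ → ℕ} (k : ℕ) :
    (cantorProd a k : ℝ) * (∑ i ∈ range n, (c i : ℝ) / ∏ j ∈ range (i + 1), (a j : ℝ))
      = (cH a n c k : ℝ) + cT a n c k := by
  have hmin : min k n ≤ n := min_le_right _ _
  rw [← Finset.sum_range_add_sum_Ico
      (fun i => (c i : ℝ) / ∏ j ∈ range (i + 1), (a j : ℝ)) hmin, mul_add]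
  congr 1
  · rw [Finset.mul_sum]
    unfold cH
    push_cast
    refine Finset.sum_congr rfl fun i hi => ?_
    have hik : i + 1 ≤ k := by
      have := Finset.mem_range.mp hi
      omega
    have hsplit : (cantorProd a k : ℝ) =
        (∏ j ∈ range (i+1), (a j : ℝ)) * ∏ j ∈ Ico (i+1) k, (a j : ℝ) := by
      unfold cantorProd; push_cast; rw [Finset.prod_range_mul_prod_Ico _ hik]
    have hne : (∏ j ∈ range (i+1), (a j : ℝ)) ≠ 0 := by
      refine ne_of_gt (Finset.prod_pos fun j _ => ?_)
      exact_mod_cast lt_of_lt_of_le two_pos (ha j)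
    rw [hsplit]
    field_simp
  · unfold cT
    rcases le_or_gt k n with hkn | hnk
    · rw [min_eq_left hkn, Finset.mul_sum]
      refine Finset.sum_congr rfl fun i hi => ?_
      have hki : k ≤ i := (Finset.mem_Ico.mp hi).1
      have hsplit : (∏ j ∈ range (i+1), (a j : ℝ)) =
          (cantorProd a k : ℝ) * ∏ j ∈ Ico k (i+1), (a j : ℝ) := by
        unfold cantorProd; push_cast; rw [Finset.prod_range_mul_prod_Ico _ (by omega)]
      have h1 : ((cantorProd a k : ℕ) : ℝ) ≠ 0 := ne_of_gt (cantorProd_real_pos ha k)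
      have h2 : (∏ j ∈ Ico k (i+1), (a j : ℝ)) ≠ 0 := ne_of_gt (Ico_prod_pos ha _ _)
      rw [hsplit]
      field_simp
    · rw [min_eq_right hnk.le]
      rw [Finset.Ico_eq_empty (by omega), Finset.Ico_eq_empty (by omega)]
      simp

lemma cT_nonneg {a : ℕ → ℕ} (ha : ∀ j, 2 ≤ a j) (n : ℕ) (c : ℕ → ℕ) (k : ℕ) :
    0 ≤ cT a n c k := by
  refine Finset.sum_nonneg fun i _ => ?_
  have := Ico_prod_pos ha k (i+1)
  positivity

lemma cT_lb {a : ℕ → ℕ} (ha : ∀ j, 2 ≤ a j) {n : ℕ} {c : ℕ → ℕ} {k : ℕ}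
    (hk : k < n) (hcn : 1 ≤ c (n - 1)) :
    (∏ j ∈ Ico k n, (a j : ℝ))⁻¹ ≤ cT a n c k := by
  have hmem : n - 1 ∈ Ico k n := Finset.mem_Ico.mpr ⟨by omega, by omega⟩
  have hterm : (∏ j ∈ Ico k n, (a j : ℝ))⁻¹
      ≤ (c (n-1) : ℝ) / ∏ j ∈ Ico k (n - 1 + 1), (a j : ℝ) := by
    have he : n - 1 + 1 = n := by omega
    have hp := Ico_prod_pos ha k n
    rw [he, inv_eq_one_div]
    gcongr
    exact_mod_cast hcn
  refine le_trans hterm ?_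
  refine Finset.single_le_sum (f := fun i => (c i : ℝ) / ∏ j ∈ Ico k (i+1), (a j : ℝ))
    (fun i _ => ?_) hmem
  have := Ico_prod_pos ha k (i+1)
  positivity

lemma cT_ub {a : ℕ → ℕ} (ha : ∀ j, 2 ≤ a j) {c : ℕ → ℕ} (hc : ∀ i, c i < a i)
    {n k : ℕ} (hk : k ≤ n) :
    cT a n c k ≤ 1 - (∏ j ∈ Ico k n, (a j : ℝ))⁻¹ := by
  unfold cT
  induction n, hk using Nat.le_induction with
  | base => simp
  | succ m hkm ih =>
    rw [Finset.sum_Ico_succ_top hkm, Finset.prod_Ico_succ_top hkm]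
    have h1 : (0:ℝ) < ∏ j ∈ Ico k m, (a j : ℝ) := Ico_prod_pos ha _ _
    have h2 : (0:ℝ) < (a m : ℝ) := by exact_mod_cast lt_of_lt_of_le two_pos (ha m)
    have h3 : (c m : ℝ) ≤ (a m : ℝ) - 1 := by
      have h4 : (c m : ℝ) + 1 ≤ (a m : ℝ) := by exact_mod_cast hc m
      linarith
    have hterm : (c m : ℝ) / ((∏ j ∈ Ico k m, (a j : ℝ)) * (a m : ℝ))
        ≤ ((a m : ℝ) - 1) / ((∏ j ∈ Ico k m, (a j : ℝ)) * (a m : ℝ)) := by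
      gcongr
    calc (∑ i ∈ Ico k m, (c i : ℝ) / ∏ j ∈ Ico k (i+1), (a j : ℝ))
          + (c m : ℝ) / ((∏ j ∈ Ico k m, (a j : ℝ)) * (a m : ℝ))
        ≤ (1 - (∏ j ∈ Ico k m, (a j : ℝ))⁻¹)
          + ((a m : ℝ) - 1) / ((∏ j ∈ Ico k m, (a j : ℝ)) * (a m : ℝ)) :=
          add_le_add ih hterm
      _ = 1 - ((∏ j ∈ Ico k m, (a j : ℝ)) * (a m : ℝ))⁻¹ := by field_simp; ring

lemma cH_succ {a : ℕ → ℕ} (n : ℕ) (c : ℕ → ℕ) (k : ℕ) :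
    cH a n c (k+1) = (if k < n then c k else 0) + a k * cH a n c k := by
  unfold cH
  rcases lt_or_ge k n with hkn | hnk
  · rw [min_eq_left (by omega : k + 1 ≤ n), min_eq_left (by omega : k ≤ n)]
    rw [Finset.sum_range_succ, Finset.Ico_eq_empty (by omega)]
    simp only [Finset.prod_empty, mul_one, if_pos hkn]
    rw [Finset.mul_sum]
    rw [add_comm]
    congr 1
    refine Finset.sum_congr rfl fun i hi => ?_
    have hik : i + 1 ≤ k := by have := Finset.mem_range.mp hi; omega
    rw [Finset.prod_Ico_succ_top hik]
    ring
  · rw [min_eq_right (by omega : n ≤ k + 1), min_eq_right hnk, if_neg (by omega)]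
    rw [Finset.mul_sum, zero_add]
    refine Finset.sum_congr rfl fun i hi => ?_
    have hik : i + 1 ≤ k := by have := Finset.mem_range.mp hi; omega
    rw [Finset.prod_Ico_succ_top hik]
    ring

lemma cT_eq_zero {a : ℕ → ℕ} {n : ℕ} {c : ℕ → ℕ} {k : ℕ} (h : n ≤ k) :
    cT a n c k = 0 := by
  unfold cT
  rw [Finset.Ico_eq_empty (by omega)]
  simp

lemma PmulPNinv {a : ℕ → ℕ} (ha : ∀ j, 2 ≤ a j) {k N : ℕ} (hk : k ≤ N) :
    (cantorProd a k : ℝ) * ((cantorProd a N : ℝ))⁻¹ = (∏ j ∈ Ico k N, (a j : ℝ))⁻¹ := by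
  rw [cantorProd_mul (a := a) hk]
  have h1 : (cantorProd a k : ℝ) ≠ 0 := ne_of_gt (cantorProd_real_pos ha k)
  have h2 : (∏ j ∈ Ico k N, (a j : ℝ)) ≠ 0 := ne_of_gt (Ico_prod_pos ha _ _)
  field_simp

lemma Ico_prod_mono {a : ℕ → ℕ} (ha : ∀ j, 2 ≤ a j) {k m N : ℕ} (h1 : k ≤ m) (h2 : m ≤ N) :
    (∏ j ∈ Ico k m, (a j : ℝ)) ≤ ∏ j ∈ Ico k N, (a j : ℝ) := by
  rw [← Finset.prod_Ico_consecutive (fun j => (a j : ℝ)) h1 h2]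
  nth_rewrite 1 [← mul_one (∏ j ∈ Ico k m, (a j : ℝ))]
  exact mul_le_mul_of_nonneg_left (Ico_prod_ge_one ha _ _) (Ico_prod_pos ha _ _).le

lemma right_floor {a : ℕ → ℕ} (ha : ∀ j, 2 ≤ a j) {n : ℕ} {c : ℕ → ℕ}
    (hc : ∀ i, c i < a i) {x₀ : ℝ}
    (hx : x₀ = ∑ i ∈ range n, (c i : ℝ) / ∏ j ∈ range (i + 1), (a j : ℝ))
    {N : ℕ} (hN : n ≤ N) {x : ℝ} (hx1 : x₀ ≤ x)
    (hx2 : x < x₀ + ((cantorProd a N : ℝ))⁻¹)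
    {k : ℕ} (hk : k ≤ N) : ⌊(cantorProd a k : ℝ) * x⌋ = (cH a n c k : ℤ) := by
  have hP : (0:ℝ) < (cantorProd a k : ℝ) := cantorProd_real_pos ha k
  have hdec : (cantorProd a k : ℝ) * x₀ = (cH a n c k : ℝ) + cT a n c k := by
    rw [hx]; exact cantor_decomp ha k
  have hub : cT a n c k + (cantorProd a k : ℝ) * ((cantorProd a N : ℝ))⁻¹ ≤ 1 := by
    rw [PmulPNinv ha hk]
    rcases le_or_gt n k with hnk | hkn
    · rw [cT_eq_zero hnk, zero_add]
      rw [inv_le_one_iff₀]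
      right; exact Ico_prod_ge_one ha _ _
    · have h1 := cT_ub ha hc (le_of_lt hkn) (n := n) (k := k)
      have h2 : (∏ j ∈ Ico k N, (a j : ℝ))⁻¹ ≤ (∏ j ∈ Ico k n, (a j : ℝ))⁻¹ := by
        apply inv_anti₀ (Ico_prod_pos ha _ _)
        exact Ico_prod_mono ha (le_of_lt hkn) hN
      linarith
  rw [Int.floor_eq_iff]
  constructor
  · push_cast
    calc ((cH a n c k : ℝ)) ≤ (cH a n c k : ℝ) + cT a n c k :=
        le_add_of_nonneg_right (cT_nonneg ha n c k)
      _ = (cantorProd a k : ℝ) * x₀ := hdec.symm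
      _ ≤ (cantorProd a k : ℝ) * x := by exact mul_le_mul_of_nonneg_left hx1 hP.le
  · push_cast
    calc (cantorProd a k : ℝ) * x < (cantorProd a k : ℝ) * (x₀ + ((cantorProd a N : ℝ))⁻¹) :=
        mul_lt_mul_of_pos_left hx2 hP
      _ = (cH a n c k : ℝ) + (cT a n c k + (cantorProd a k : ℝ) * ((cantorProd a N : ℝ))⁻¹) := by
        rw [mul_add, hdec]; ring
      _ ≤ (cH a n c k : ℝ) + 1 := by linarith

lemma left_floor {a : ℕ → ℕ} (ha : ∀ j, 2 ≤ a j) {n : ℕ} (hn : 1 ≤ n) {c : ℕ → ℕ}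
    (hc : ∀ i, c i < a i) (hcn : 1 ≤ c (n - 1)) {x₀ : ℝ}
    (hx : x₀ = ∑ i ∈ range n, (c i : ℝ) / ∏ j ∈ range (i + 1), (a j : ℝ))
    {N : ℕ} (hN : n ≤ N) {x : ℝ} (hx1 : x₀ - ((cantorProd a N : ℝ))⁻¹ < x)
    (hx2 : x < x₀) {k : ℕ} (hk : k ≤ N) :
    ⌊(cantorProd a k : ℝ) * x⌋ = if k < n then (cH a n c k : ℤ) else (cH a n c k : ℤ) - 1 := by
  have hP : (0:ℝ) < (cantorProd a k : ℝ) := cantorProd_real_pos ha k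
  have hdec : (cantorProd a k : ℝ) * x₀ = (cH a n c k : ℝ) + cT a n c k := by
    rw [hx]; exact cantor_decomp ha k
  have hPN : (cantorProd a k : ℝ) * ((cantorProd a N : ℝ))⁻¹ = (∏ j ∈ Ico k N, (a j : ℝ))⁻¹ :=
    PmulPNinv ha hk
  have hxlow : (cantorProd a k : ℝ) * x₀ - (∏ j ∈ Ico k N, (a j : ℝ))⁻¹
      < (cantorProd a k : ℝ) * x := by
    have := mul_lt_mul_of_pos_left hx1 hP
    rw [mul_sub, hPN] at this
    linarith
  have hxhigh : (cantorProd a k : ℝ) * x < (cH a n c k : ℝ) + cT a n c k := by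
    rw [← hdec]; exact mul_lt_mul_of_pos_left hx2 hP
  rcases lt_or_ge k n with hkn | hnk
  · rw [if_pos hkn]
    rw [Int.floor_eq_iff]
    constructor
    · push_cast
      have hlb := cT_lb ha hkn hcn
      have h2 : (∏ j ∈ Ico k N, (a j : ℝ))⁻¹ ≤ (∏ j ∈ Ico k n, (a j : ℝ))⁻¹ := by
        apply inv_anti₀ (Ico_prod_pos ha _ _)
        exact Ico_prod_mono ha (le_of_lt hkn) hN
      have := hdec
      linarith
    · push_cast
      have hub := cT_ub ha hc (le_of_lt hkn) (n := n) (k := k)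
      have hinv : (0:ℝ) < (∏ j ∈ Ico k n, (a j : ℝ))⁻¹ := by
        have := Ico_prod_pos ha k n; positivity
      linarith
  · rw [if_neg (by omega)]
    rw [cT_eq_zero hnk] at hdec hxhigh
    rw [Int.floor_eq_iff]
    constructor
    · push_cast
      have h2 : (∏ j ∈ Ico k N, (a j : ℝ))⁻¹ ≤ 1 := by
        rw [inv_le_one_iff₀]; right; exact Ico_prod_ge_one ha _ _
      linarith
    · push_cast
      linarith

lemma right_digit {a : ℕ → ℕ} (ha : ∀ j, 2 ≤ a j) {n : ℕ} {c : ℕ → ℕ}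
    (hc : ∀ i, c i < a i) {x₀ : ℝ}
    (hx : x₀ = ∑ i ∈ range n, (c i : ℝ) / ∏ j ∈ range (i + 1), (a j : ℝ))
    {N : ℕ} (hN : n ≤ N) {x : ℝ} (hx1 : x₀ ≤ x)
    (hx2 : x < x₀ + ((cantorProd a N : ℝ))⁻¹)
    {k : ℕ} (hk : k < N) :
    cantorDigit a x k = if k < n then (c k : ℤ) else 0 := by
  unfold cantorDigit
  rw [right_floor ha hc hx hN hx1 hx2 (by omega : k + 1 ≤ N),
      right_floor ha hc hx hN hx1 hx2 (by omega : k ≤ N)]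
  have hs := cH_succ (a := a) n c k
  rcases lt_or_ge k n with h | h
  · rw [if_pos h] at hs ⊢
    rw [hs]; push_cast; ring
  · rw [if_neg (by omega)] at hs ⊢
    rw [hs]; push_cast; ring

lemma left_digit {a : ℕ → ℕ} (ha : ∀ j, 2 ≤ a j) {n : ℕ} (hn : 1 ≤ n) {c : ℕ → ℕ}
    (hc : ∀ i, c i < a i) (hcn : 1 ≤ c (n - 1)) {x₀ : ℝ}
    (hx : x₀ = ∑ i ∈ range n, (c i : ℝ) / ∏ j ∈ range (i + 1), (a j : ℝ))
    {N : ℕ} (hN : n ≤ N) {x : ℝ} (hx1 : x₀ - ((cantorProd a N : ℝ))⁻¹ < x)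
    (hx2 : x < x₀) {k : ℕ} (hk : k < N) :
    cantorDigit a x k = if k < n - 1 then (c k : ℤ)
      else if k = n - 1 then (c (n-1) : ℤ) - 1 else (a k : ℤ) - 1 := by
  unfold cantorDigit
  rw [left_floor ha hn hc hcn hx hN hx1 hx2 (by omega : k + 1 ≤ N),
      left_floor ha hn hc hcn hx hN hx1 hx2 (by omega : k ≤ N)]
  have hs := cH_succ (a := a) n c k
  rcases lt_or_ge k (n-1) with h | h
  · rw [if_pos (by omega : k + 1 < n), if_pos (by omega : k < n), if_pos h]
    rw [if_pos (by omega : k < n)] at hs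
    rw [hs]; push_cast; ring
  · rcases eq_or_lt_of_le h with h' | h'
    · rw [if_neg (by omega : ¬ k + 1 < n), if_pos (by omega : k < n),
        if_neg (by omega : ¬ k < n - 1), if_pos h'.symm]
      rw [if_pos (by omega : k < n)] at hs
      rw [hs]
      have : c k = c (n-1) := by rw [← h']
      rw [this]; push_cast; ring
    · rw [if_neg (by omega : ¬ k + 1 < n), if_neg (by omega : ¬ k < n),
        if_neg (by omega : ¬ k < n - 1), if_neg (by omega : ¬ k = n - 1)]
      rw [if_neg (by omega : ¬ k < n)] at hs
      rw [hs]; push_cast; ring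

lemma q_inv_lt_one {q : ℕ} (hq : 2 ≤ q) : ((q:ℝ))⁻¹ < 1 := by
  have hq1 : (1:ℝ) < (q:ℝ) := by exact_mod_cast lt_of_lt_of_le one_lt_two hq
  rw [inv_lt_one_iff₀]; right; exact hq1

lemma div_pow_eq {q : ℕ} (hq : 2 ≤ q) (r : ℝ) (N : ℕ) :
    (fun k : ℕ => r / (q:ℝ) ^ (k + N + 1))
      = fun k : ℕ => (r / (q:ℝ) ^ (N + 1)) * ((q:ℝ)⁻¹) ^ k := by
  have hq0 : (0:ℝ) < (q:ℝ) := by positivity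
  funext k
  have hpow : (q:ℝ) ^ (k + N + 1) = (q:ℝ) ^ (N + 1) * (q:ℝ) ^ k := by
    rw [← pow_add]; congr 1; omega
  rw [hpow, division_def, mul_inv, division_def, inv_pow]; ring

lemma summable_div_pow {q : ℕ} (hq : 2 ≤ q) (r : ℝ) (N : ℕ) :
    Summable (fun k : ℕ => r / (q:ℝ) ^ (k + N + 1)) := by
  rw [div_pow_eq hq]
  have hq0 : (0:ℝ) < (q:ℝ) := by positivity
  exact (summable_geometric_of_lt_one (by positivity) (q_inv_lt_one hq)).mul_left _

lemma tsum_div_pow {q : ℕ} (hq : 2 ≤ q) (r : ℝ) (N : ℕ) :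
    ∑' k : ℕ, r / (q:ℝ) ^ (k + N + 1) = r / (((q:ℝ) - 1) * (q:ℝ) ^ N) := by
  have hq0 : (0:ℝ) < (q:ℝ) := by positivity
  have hq1 : (1:ℝ) < (q:ℝ) := by exact_mod_cast lt_of_lt_of_le one_lt_two hq
  have hA : ((q:ℝ) - 1) ≠ 0 := by linarith
  have h2 : (1 - (q:ℝ)⁻¹) = ((q:ℝ) - 1) / q := by field_simp
  rw [div_pow_eq hq, tsum_mul_left,
    tsum_geometric_of_lt_one (by positivity) (q_inv_lt_one hq), h2, inv_div]
  rw [div_mul_div_comm]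
  rw [div_eq_div_iff (by positivity) (by positivity)]
  ring

lemma summable_digit_series {q : ℕ} (hq : 2 ≤ q) {a : ℕ → ℕ} (ha : ∀ j, 2 ≤ a j)
    (haq : ∀ j, a j ≤ q) (x : ℝ) :
    Summable (fun k : ℕ => (cantorDigit a x k : ℝ) / (q:ℝ) ^ (k + 1)) := by
  have hq0 : (0:ℝ) < (q:ℝ) := by positivity
  refine Summable.of_nonneg_of_le (fun k => ?_) (fun k => ?_) (summable_div_pow hq ((q:ℝ) - 1) 0)
  · have h1 : (0:ℝ) ≤ (cantorDigit a x k : ℝ) := by exact_mod_cast cantorDigit_nonneg ha x k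
    positivity
  · show (cantorDigit a x k : ℝ) / (q:ℝ) ^ (k + 1) ≤ ((q:ℝ) - 1) / (q:ℝ) ^ (k + 1)
    have h3 : (cantorDigit a x k : ℝ) ≤ (a k : ℝ) - 1 := by exact_mod_cast cantorDigit_le ha x k
    have h4 : (a k : ℝ) ≤ (q:ℝ) := by exact_mod_cast haq k
    gcongr
    linarith

lemma digit_tail_bound {q : ℕ} (hq : 2 ≤ q) {a : ℕ → ℕ} (ha : ∀ j, 2 ≤ a j)
    (haq : ∀ j, a j ≤ q) (x : ℝ) (N : ℕ) :
    0 ≤ (∑' k : ℕ, (cantorDigit a x (k + N) : ℝ) / (q:ℝ) ^ (k + N + 1)) ∧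
    (∑' k : ℕ, (cantorDigit a x (k + N) : ℝ) / (q:ℝ) ^ (k + N + 1)) ≤ 1 / (q:ℝ) ^ N := by
  have hq0 : (0:ℝ) < (q:ℝ) := by positivity
  have hq1 : (1:ℝ) < (q:ℝ) := by exact_mod_cast lt_of_lt_of_le one_lt_two hq
  have hsum : Summable (fun k : ℕ => (cantorDigit a x (k + N) : ℝ) / (q:ℝ) ^ (k + N + 1)) :=
    (summable_nat_add_iff (f := fun k : ℕ => (cantorDigit a x k : ℝ) / (q:ℝ) ^ (k + 1)) N).mpr
      (summable_digit_series hq ha haq x)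
  have hnn : ∀ k : ℕ, (0:ℝ) ≤ (cantorDigit a x (k + N) : ℝ) / (q:ℝ) ^ (k + N + 1) := by
    intro k
    have h1 : (0:ℝ) ≤ (cantorDigit a x (k + N) : ℝ) := by
      exact_mod_cast cantorDigit_nonneg ha x (k + N)
    positivity
  refine ⟨tsum_nonneg hnn, ?_⟩
  have hle : ∀ k : ℕ, (cantorDigit a x (k + N) : ℝ) / (q:ℝ) ^ (k + N + 1)
      ≤ ((q:ℝ) - 1) / (q:ℝ) ^ (k + N + 1) := by
    intro k
    have h3 : (cantorDigit a x (k + N) : ℝ) ≤ (a (k + N) : ℝ) - 1 := by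
      exact_mod_cast cantorDigit_le ha x (k + N)
    have h4 : (a (k + N) : ℝ) ≤ (q:ℝ) := by exact_mod_cast haq (k + N)
    gcongr
    linarith
  calc (∑' k : ℕ, (cantorDigit a x (k + N) : ℝ) / (q:ℝ) ^ (k + N + 1))
      ≤ ∑' k : ℕ, ((q:ℝ) - 1) / (q:ℝ) ^ (k + N + 1) :=
        Summable.tsum_le_tsum hle hsum (summable_div_pow hq _ N)
    _ = ((q:ℝ) - 1) / (((q:ℝ) - 1) * (q:ℝ) ^ N) := tsum_div_pow hq _ N
    _ = 1 / (q:ℝ) ^ N := by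
        rw [div_mul_eq_div_div, div_self (by linarith : (q:ℝ) - 1 ≠ 0)]

lemma summable_aseries {q : ℕ} (hq : 2 ≤ q) {a : ℕ → ℕ} (ha : ∀ j, 2 ≤ a j) (haq : ∀ j, a j ≤ q) :
    Summable (fun k : ℕ => ((a k : ℝ) - 1) / (q:ℝ) ^ (k + 1)) := by
  have hq0 : (0:ℝ) < (q:ℝ) := by positivity
  refine Summable.of_nonneg_of_le (fun k => ?_) (fun k => ?_) (summable_div_pow hq ((q:ℝ) - 1) 0)
  · have h4 : (1:ℝ) ≤ (a k : ℝ) := by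
      have := ha k; have h5 : 1 ≤ a k := by omega
      exact_mod_cast h5
    have h5 : (0:ℝ) < (q:ℝ) ^ (k+1) := by positivity
    apply div_nonneg _ h5.le
    linarith
  · show ((a k : ℝ) - 1) / (q:ℝ) ^ (k + 1) ≤ ((q:ℝ) - 1) / (q:ℝ) ^ (k + 1)
    have h4 : (a k : ℝ) ≤ (q:ℝ) := by exact_mod_cast haq k
    gcongr

lemma aseries_tail_bound {q : ℕ} (hq : 2 ≤ q) {a : ℕ → ℕ} (ha : ∀ j, 2 ≤ a j)
    (haq : ∀ j, a j ≤ q) (N : ℕ) :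
    0 ≤ (∑' k : ℕ, ((a (k + N) : ℝ) - 1) / (q:ℝ) ^ (k + N + 1)) ∧
    (∑' k : ℕ, ((a (k + N) : ℝ) - 1) / (q:ℝ) ^ (k + N + 1)) ≤ 1 / (q:ℝ) ^ N := by
  have hq0 : (0:ℝ) < (q:ℝ) := by positivity
  have hq1 : (1:ℝ) < (q:ℝ) := by exact_mod_cast lt_of_lt_of_le one_lt_two hq
  have hsum : Summable (fun k : ℕ => ((a (k + N) : ℝ) - 1) / (q:ℝ) ^ (k + N + 1)) :=
    (summable_nat_add_iff
      (f := fun k : ℕ => ((a k : ℝ) - 1) / (q:ℝ) ^ (k + 1)) N).mpr (summable_aseries hq ha haq)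
  have hnn : ∀ k : ℕ, (0:ℝ) ≤ ((a (k + N) : ℝ) - 1) / (q:ℝ) ^ (k + N + 1) := by
    intro k
    have h1 : (1:ℝ) ≤ (a (k + N) : ℝ) := by
      have := ha (k + N); have h5 : 1 ≤ a (k + N) := by omega
      exact_mod_cast h5
    have h5 : (0:ℝ) < (q:ℝ) ^ (k + N + 1) := by positivity
    apply div_nonneg _ h5.le
    linarith
  refine ⟨tsum_nonneg hnn, ?_⟩
  have hle : ∀ k : ℕ, ((a (k + N) : ℝ) - 1) / (q:ℝ) ^ (k + N + 1)
      ≤ ((q:ℝ) - 1) / (q:ℝ) ^ (k + N + 1) := by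
    intro k
    have h4 : (a (k + N) : ℝ) ≤ (q:ℝ) := by exact_mod_cast haq (k + N)
    gcongr
  calc (∑' k : ℕ, ((a (k + N) : ℝ) - 1) / (q:ℝ) ^ (k + N + 1))
      ≤ ∑' k : ℕ, ((q:ℝ) - 1) / (q:ℝ) ^ (k + N + 1) :=
        Summable.tsum_le_tsum hle hsum (summable_div_pow hq _ N)
    _ = ((q:ℝ) - 1) / (((q:ℝ) - 1) * (q:ℝ) ^ N) := tsum_div_pow hq _ N
    _ = 1 / (q:ℝ) ^ N := by
        rw [div_mul_eq_div_div, div_self (by linarith : (q:ℝ) - 1 ≠ 0)]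

lemma exists_N {q : ℕ} (hq : 2 ≤ q) (n : ℕ) {ε : ℝ} (hε : 0 < ε) :
    ∃ N, n ≤ N ∧ 1 / (q:ℝ) ^ N < ε := by
  have hq0 : (0:ℝ) < (q:ℝ) := by positivity
  obtain ⟨M, hM⟩ := exists_pow_lt_of_lt_one hε (q_inv_lt_one hq)
  refine ⟨max M n, le_max_right _ _, ?_⟩
  calc 1 / (q:ℝ) ^ (max M n) = ((q:ℝ)⁻¹) ^ (max M n) := by rw [one_div, inv_pow]
    _ ≤ ((q:ℝ)⁻¹) ^ M :=
        pow_le_pow_of_le_one (by positivity) (q_inv_lt_one hq).le (le_max_left _ _)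
    _ < ε := hM

lemma tendsto_right_lim {q : ℕ} (hq : 2 ≤ q) {a : ℕ → ℕ} (ha2 : ∀ j, 2 ≤ a j)
    (haq : ∀ j, a j ≤ q) {x₀ : ℝ} (hx0lt : x₀ < 1) {n : ℕ} {c : ℕ → ℕ}
    (hc : ∀ i, c i < a i)
    (hx : x₀ = ∑ i ∈ range n, (c i : ℝ) / ∏ j ∈ range (i + 1), (a j : ℝ)) :
    Tendsto (cantorF a q) (nhdsWithin x₀ (Set.Ioc x₀ 1))
      (nhds (∑ k ∈ range n, (c k : ℝ) / (q:ℝ) ^ (k + 1))) := by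
  set S := ∑ k ∈ range n, (c k : ℝ) / (q:ℝ) ^ (k + 1) with hS
  rw [Metric.tendsto_nhdsWithin_nhds]
  intro ε hε
  obtain ⟨N, hNn, hNe⟩ := exists_N hq n hε
  have hPN : (0:ℝ) < (cantorProd a N : ℝ) := cantorProd_real_pos ha2 N
  refine ⟨min ((cantorProd a N : ℝ))⁻¹ (1 - x₀), lt_min (by positivity) (by linarith), ?_⟩
  intro x hxmem hdist
  obtain ⟨hxgt, hxle⟩ := hxmem
  rw [Real.dist_eq] at hdist
  have hd1 : x - x₀ < ((cantorProd a N : ℝ))⁻¹ :=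
    lt_of_le_of_lt (le_abs_self _) (lt_of_lt_of_le hdist (min_le_left _ _))
  have hd2 : x - x₀ < 1 - x₀ :=
    lt_of_le_of_lt (le_abs_self _) (lt_of_lt_of_le hdist (min_le_right _ _))
  have hxlt1 : x < 1 := by linarith
  have hxlt : x < x₀ + ((cantorProd a N : ℝ))⁻¹ := by linarith
  have hsumD := summable_digit_series hq ha2 haq x
  have hfx : cantorF a q x = (∑ k ∈ range N, (cantorDigit a x k : ℝ) / (q:ℝ) ^ (k + 1))
      + ∑' k : ℕ, (cantorDigit a x (k + N) : ℝ) / (q:ℝ) ^ (k + N + 1) := by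
    simp only [cantorF, if_pos hxlt1]
    rw [← Summable.sum_add_tsum_nat_add N hsumD]
  have hpart : (∑ k ∈ range N, (cantorDigit a x k : ℝ) / (q:ℝ) ^ (k + 1)) = S := by
    rw [← Finset.sum_range_add_sum_Ico
      (fun k => (cantorDigit a x k : ℝ) / (q:ℝ) ^ (k + 1)) hNn]
    have h1 : (∑ k ∈ range n, (cantorDigit a x k : ℝ) / (q:ℝ) ^ (k + 1)) = S := by
      refine Finset.sum_congr rfl fun k hk => ?_
      rw [right_digit ha2 hc hx hNn hxgt.le hxlt
        (by have := Finset.mem_range.mp hk; omega : k < N),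
        if_pos (Finset.mem_range.mp hk)]
      push_cast
      ring
    have h2 : (∑ k ∈ Ico n N, (cantorDigit a x k : ℝ) / (q:ℝ) ^ (k + 1)) = 0 := by
      refine Finset.sum_eq_zero fun k hk => ?_
      rw [right_digit ha2 hc hx hNn hxgt.le hxlt (Finset.mem_Ico.mp hk).2,
        if_neg (by have := (Finset.mem_Ico.mp hk).1; omega)]
      simp
    rw [h1, h2, add_zero]
  rw [Real.dist_eq, hfx, hpart]
  obtain ⟨ht0, ht1⟩ := digit_tail_bound hq ha2 haq x N
  rw [show S + (∑' k : ℕ, (cantorDigit a x (k + N) : ℝ) / (q:ℝ) ^ (k + N + 1)) - S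
      = ∑' k : ℕ, (cantorDigit a x (k + N) : ℝ) / (q:ℝ) ^ (k + N + 1) by ring]
  rw [abs_of_nonneg ht0]
  exact lt_of_le_of_lt ht1 hNe

lemma tendsto_left_lim {q : ℕ} (hq : 2 ≤ q) {a : ℕ → ℕ} (ha2 : ∀ j, 2 ≤ a j)
    (haq : ∀ j, a j ≤ q) {x₀ : ℝ} (hx0lt : x₀ < 1) {n : ℕ} (hn : 1 ≤ n) {c : ℕ → ℕ}
    (hc : ∀ i, c i < a i) (hcn : 1 ≤ c (n - 1))
    (hx : x₀ = ∑ i ∈ range n, (c i : ℝ) / ∏ j ∈ range (i + 1), (a j : ℝ)) :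
    Tendsto (cantorF a q) (nhdsWithin x₀ (Set.Ico 0 x₀))
      (nhds ((∑ k ∈ range n, (c k : ℝ) / (q:ℝ) ^ (k + 1)) - 1 / (q:ℝ) ^ n
        + ∑' j : ℕ, ((a (j + n) : ℝ) - 1) / (q:ℝ) ^ (j + n + 1))) := by
  have hq0 : (0:ℝ) < (q:ℝ) := by positivity
  set S := ∑ k ∈ range n, (c k : ℝ) / (q:ℝ) ^ (k + 1) with hS
  set T' := ∑' j : ℕ, ((a (j + n) : ℝ) - 1) / (q:ℝ) ^ (j + n + 1) with hT'
  set L := S - 1 / (q:ℝ) ^ n + T' with hL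
  have hsumA : Summable (fun k : ℕ => ((a k : ℝ) - 1) / (q:ℝ) ^ (k + 1)) :=
    summable_aseries hq ha2 haq
  have hsumA' : Summable (fun j : ℕ => ((a (j + n) : ℝ) - 1) / (q:ℝ) ^ (j + n + 1)) :=
    (summable_nat_add_iff (f := fun k : ℕ => ((a k : ℝ) - 1) / (q:ℝ) ^ (k + 1)) n).mpr hsumA
  rw [Metric.tendsto_nhdsWithin_nhds]
  intro ε hε
  obtain ⟨N, hNn, hNe⟩ := exists_N hq n hε
  have hPN : (0:ℝ) < (cantorProd a N : ℝ) := cantorProd_real_pos ha2 N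
  refine ⟨((cantorProd a N : ℝ))⁻¹, by positivity, ?_⟩
  intro x hxmem hdist
  obtain ⟨hxge, hxlt⟩ := hxmem
  rw [Real.dist_eq] at hdist
  have hd1 : x₀ - x < ((cantorProd a N : ℝ))⁻¹ :=
    lt_of_le_of_lt (le_abs_self (x₀ - x) |>.trans (by rw [abs_sub_comm])) hdist
  have hxgt : x₀ - ((cantorProd a N : ℝ))⁻¹ < x := by linarith
  have hxlt1 : x < 1 := by linarith
  have hsumD := summable_digit_series hq ha2 haq x
  -- value of f x
  have hfx : cantorF a q x = (∑ k ∈ range N, (cantorDigit a x k : ℝ) / (q:ℝ) ^ (k + 1))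
      + ∑' k : ℕ, (cantorDigit a x (k + N) : ℝ) / (q:ℝ) ^ (k + N + 1) := by
    simp only [cantorF, if_pos hxlt1]
    rw [← Summable.sum_add_tsum_nat_add N hsumD]
  -- partial sum of digits
  have hpart : (∑ k ∈ range N, (cantorDigit a x k : ℝ) / (q:ℝ) ^ (k + 1))
      = S - 1 / (q:ℝ) ^ n + ∑ k ∈ Ico n N, ((a k : ℝ) - 1) / (q:ℝ) ^ (k + 1) := by
    rw [← Finset.sum_range_add_sum_Ico
      (fun k => (cantorDigit a x k : ℝ) / (q:ℝ) ^ (k + 1)) hNn]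
    have h1 : (∑ k ∈ range n, (cantorDigit a x k : ℝ) / (q:ℝ) ^ (k + 1))
        = S - 1 / (q:ℝ) ^ n := by
      have hterm : ∀ k ∈ range n, (cantorDigit a x k : ℝ) / (q:ℝ) ^ (k + 1)
          = (c k : ℝ) / (q:ℝ) ^ (k + 1) - (if k = n - 1 then 1 / (q:ℝ) ^ n else 0) := by
        intro k hk
        have hkn := Finset.mem_range.mp hk
        rw [left_digit ha2 hn hc hcn hx hNn hxgt hxlt (by omega : k < N)]
        by_cases hkeq : k = n - 1
        · rw [if_neg (by omega), if_pos hkeq, if_pos hkeq]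
          subst hkeq
          rw [show n - 1 + 1 = n by omega]
          push_cast
          ring
        · rw [if_pos (by omega : k < n - 1), if_neg hkeq]
          push_cast
          ring
      rw [Finset.sum_congr rfl hterm, Finset.sum_sub_distrib]
      congr 1
      rw [Finset.sum_ite_eq' (range n) (n - 1) (fun _ => 1 / (q:ℝ) ^ n),
        if_pos (Finset.mem_range.mpr (by omega))]
    have h2 : (∑ k ∈ Ico n N, (cantorDigit a x k : ℝ) / (q:ℝ) ^ (k + 1))
        = ∑ k ∈ Ico n N, ((a k : ℝ) - 1) / (q:ℝ) ^ (k + 1) := by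
      refine Finset.sum_congr rfl fun k hk => ?_
      obtain ⟨hk1, hk2⟩ := Finset.mem_Ico.mp hk
      rw [left_digit ha2 hn hc hcn hx hNn hxgt hxlt hk2,
        if_neg (by omega), if_neg (by omega)]
      push_cast
      ring
    rw [h1, h2]
  -- decomposition of L
  have hLdec : L = (S - 1 / (q:ℝ) ^ n + ∑ k ∈ Ico n N, ((a k : ℝ) - 1) / (q:ℝ) ^ (k + 1))
      + ∑' k : ℕ, ((a (k + N) : ℝ) - 1) / (q:ℝ) ^ (k + N + 1) := by
    have hsplit : (∑ j ∈ range (N - n), ((a (j + n) : ℝ) - 1) / (q:ℝ) ^ (j + n + 1))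
        + (∑' j : ℕ, ((a (j + (N - n) + n) : ℝ) - 1) / (q:ℝ) ^ (j + (N - n) + n + 1)) = T' := by
      exact Summable.sum_add_tsum_nat_add (f := fun j : ℕ =>
        ((a (j + n) : ℝ) - 1) / (q:ℝ) ^ (j + n + 1)) (N - n) hsumA'
    have he1 : (∑ j ∈ range (N - n), ((a (j + n) : ℝ) - 1) / (q:ℝ) ^ (j + n + 1))
        = ∑ k ∈ Ico n N, ((a k : ℝ) - 1) / (q:ℝ) ^ (k + 1) := by
      rw [Finset.sum_Ico_eq_sum_range]
      refine Finset.sum_congr rfl fun j _ => ?_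
      rw [show n + j = j + n by omega]
    have he2 : (∑' j : ℕ, ((a (j + (N - n) + n) : ℝ) - 1) / (q:ℝ) ^ (j + (N - n) + n + 1))
        = ∑' k : ℕ, ((a (k + N) : ℝ) - 1) / (q:ℝ) ^ (k + N + 1) := by
      refine tsum_congr fun j => ?_
      rw [show j + (N - n) + n = j + N by omega]
    rw [hL, ← hsplit, he1, he2]
    ring
  rw [Real.dist_eq, hfx, hpart, hLdec]
  obtain ⟨ht0, ht1⟩ := digit_tail_bound hq ha2 haq x N
  obtain ⟨ha0, ha1⟩ := aseries_tail_bound hq ha2 haq N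
  rw [show S - 1 / (q:ℝ) ^ n + (∑ k ∈ Ico n N, ((a k : ℝ) - 1) / (q:ℝ) ^ (k + 1))
      + (∑' k : ℕ, (cantorDigit a x (k + N) : ℝ) / (q:ℝ) ^ (k + N + 1))
      - (S - 1 / (q:ℝ) ^ n + (∑ k ∈ Ico n N, ((a k : ℝ) - 1) / (q:ℝ) ^ (k + 1))
      + ∑' k : ℕ, ((a (k + N) : ℝ) - 1) / (q:ℝ) ^ (k + N + 1))
      = (∑' k : ℕ, (cantorDigit a x (k + N) : ℝ) / (q:ℝ) ^ (k + N + 1))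
      - ∑' k : ℕ, ((a (k + N) : ℝ) - 1) / (q:ℝ) ^ (k + N + 1) by ring]
  refine lt_of_le_of_lt (abs_le.mpr ⟨by linarith, by linarith⟩) hNe

/-- digits of the finite representation are 0-indexed: `c i` is the
paper's `c_{i+1}`, and the last digit is `c (n-1)`.  At a Q-rational point
`x₀ = ∑_{i=1}^n c_i/(q_1⋯q_i)` with `c_n ≥ 1`, the one-sided limits of `f` exist, the
jump equals `1/q^n - ∑_{j>n} (q_j - 1)/q^j ≥ 0`, and if moreover `q_j ≤ q - 1` for all
`j > n` then the jump lies in `[1/((q-1)q^n), (q-2)/((q-1)q^n)]`, so `f` is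
discontinuous at `x₀`. -/
theorem stmt4 (q : ℕ) (hq : 2 ≤ q) (a : ℕ → ℕ) (ha : ∀ n, 2 ≤ a n ∧ a n ≤ q)
    (x₀ : ℝ) (hx₀ : x₀ ∈ Set.Ioo (0 : ℝ) 1)
    (n : ℕ) (hn : 1 ≤ n) (c : ℕ → ℕ) (hc : ∀ i, c i < a i) (hcn : 1 ≤ c (n - 1))
    (hx : x₀ = ∑ i ∈ Finset.range n, (c i : ℝ) / ∏ j ∈ Finset.range (i + 1), (a j : ℝ)) :
    ∃ L R : ℝ,
      Tendsto (cantorF a q) (nhdsWithin x₀ (Set.Ico (0 : ℝ) x₀)) (nhds L) ∧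
      Tendsto (cantorF a q) (nhdsWithin x₀ (Set.Ioc x₀ (1 : ℝ))) (nhds R) ∧
      R - L = 1 / (q : ℝ) ^ n - ∑' j : ℕ, ((a (n + j) : ℝ) - 1) / (q : ℝ) ^ (n + j + 1) ∧
      0 ≤ R - L ∧
      ((∀ j, n ≤ j → a j ≤ q - 1) →
        1 / (((q : ℝ) - 1) * (q : ℝ) ^ n) ≤ R - L ∧
        R - L ≤ ((q : ℝ) - 2) / (((q : ℝ) - 1) * (q : ℝ) ^ n) ∧
        ¬ ContinuousWithinAt (cantorF a q) (Set.Icc (0 : ℝ) 1) x₀) := by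
  obtain ⟨hx0pos, hx0lt⟩ := hx₀
  have ha2 : ∀ j, 2 ≤ a j := fun j => (ha j).1
  have haq : ∀ j, a j ≤ q := fun j => (ha j).2
  have hq2 : (2:ℝ) ≤ (q:ℝ) := by exact_mod_cast hq
  have hq0 : (0:ℝ) < (q:ℝ) := by linarith
  have hq1 : (1:ℝ) < (q:ℝ) := by linarith
  have hqn : (0:ℝ) < (q:ℝ) ^ n := pow_pos hq0 n
  set S := ∑ k ∈ range n, (c k : ℝ) / (q:ℝ) ^ (k + 1) with hS
  set T := ∑' j : ℕ, ((a (n + j) : ℝ) - 1) / (q:ℝ) ^ (n + j + 1) with hT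
  have hTT : (∑' j : ℕ, ((a (j + n) : ℝ) - 1) / (q:ℝ) ^ (j + n + 1)) = T :=
    tsum_congr fun j => by rw [add_comm j n]
  have hsumA : Summable (fun k : ℕ => ((a k : ℝ) - 1) / (q:ℝ) ^ (k + 1)) :=
    summable_aseries hq ha2 haq
  have hsumA' : Summable (fun j : ℕ => ((a (j + n) : ℝ) - 1) / (q:ℝ) ^ (j + n + 1)) :=
    (summable_nat_add_iff (f := fun k : ℕ => ((a k : ℝ) - 1) / (q:ℝ) ^ (k + 1)) n).mpr hsumA
  have hLtend : Tendsto (cantorF a q) (nhdsWithin x₀ (Set.Ico (0:ℝ) x₀))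
      (nhds (S - 1 / (q:ℝ) ^ n + T)) := by
    have h := tendsto_left_lim hq ha2 haq hx0lt hn hc hcn hx
    rwa [hTT] at h
  have hRtend : Tendsto (cantorF a q) (nhdsWithin x₀ (Set.Ioc x₀ (1:ℝ))) (nhds S) :=
    tendsto_right_lim hq ha2 haq hx0lt hc hx
  have hTub0 : T ≤ 1 / (q:ℝ) ^ n := by
    rw [← hTT]
    exact (aseries_tail_bound hq ha2 haq n).2
  refine ⟨S - 1 / (q:ℝ) ^ n + T, S, hLtend, hRtend, by ring, by linarith, ?_⟩
  intro hextra
  have hq3 : 3 ≤ q := by have h1 := ha2 n; have h2 := hextra n (le_refl n); omega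
  have hqm : (0:ℝ) < ((q:ℝ) - 1) * (q:ℝ) ^ n := mul_pos (by linarith) hqn
  have hA : ((q:ℝ) - 1) ≠ 0 := by linarith
  have hid : 1 / (((q:ℝ) - 1) * (q:ℝ) ^ n) + ((q:ℝ) - 2) / (((q:ℝ) - 1) * (q:ℝ) ^ n)
      = 1 / (q:ℝ) ^ n := by
    rw [← add_div, div_mul_eq_div_div]
    rw [show (1:ℝ) + ((q:ℝ) - 2) = (q:ℝ) - 1 by ring]
    rw [div_self hA]
  have hTub : T ≤ ((q:ℝ) - 2) / (((q:ℝ) - 1) * (q:ℝ) ^ n) := by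
    rw [← hTT]
    calc (∑' j : ℕ, ((a (j + n) : ℝ) - 1) / (q:ℝ) ^ (j + n + 1))
        ≤ ∑' j : ℕ, ((q:ℝ) - 2) / (q:ℝ) ^ (j + n + 1) := by
          refine Summable.tsum_le_tsum (fun j => ?_) hsumA' (summable_div_pow hq _ n)
          have h1 : a (j + n) ≤ q - 1 := hextra (j + n) (by omega)
          have h2 : (a (j + n) : ℝ) ≤ ((q - 1 : ℕ) : ℝ) := by exact_mod_cast h1
          have h3 : ((q - 1 : ℕ) : ℝ) = (q:ℝ) - 1 := by
            push_cast [Nat.cast_sub (by omega : 1 ≤ q)]; ring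
          have h4 : (a (j + n) : ℝ) - 1 ≤ (q:ℝ) - 2 := by rw [h3] at h2; linarith
          gcongr
      _ = ((q:ℝ) - 2) / (((q:ℝ) - 1) * (q:ℝ) ^ n) := tsum_div_pow hq _ n
  have hTlb : 1 / (((q:ℝ) - 1) * (q:ℝ) ^ n) ≤ T := by
    rw [← hTT]
    calc 1 / (((q:ℝ) - 1) * (q:ℝ) ^ n) = ∑' j : ℕ, (1:ℝ) / (q:ℝ) ^ (j + n + 1) :=
          (tsum_div_pow hq 1 n).symm
      _ ≤ ∑' j : ℕ, ((a (j + n) : ℝ) - 1) / (q:ℝ) ^ (j + n + 1) := by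
          refine Summable.tsum_le_tsum (fun j => ?_) (summable_div_pow hq 1 n) hsumA'
          have h1 : (2:ℝ) ≤ (a (j + n) : ℝ) := by exact_mod_cast ha2 (j + n)
          gcongr
          linarith
  refine ⟨by linarith, by linarith, ?_⟩
  intro hcont
  have hne1 : (nhdsWithin x₀ (Set.Ico (0:ℝ) x₀)).NeBot := by
    rw [← mem_closure_iff_nhdsWithin_neBot, closure_Ico (ne_of_lt hx0pos)]
    exact ⟨hx0pos.le, le_refl x₀⟩
  have hne2 : (nhdsWithin x₀ (Set.Ioc x₀ (1:ℝ))).NeBot := by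
    rw [← mem_closure_iff_nhdsWithin_neBot, closure_Ioc (ne_of_lt hx0lt)]
    exact ⟨le_refl x₀, hx0lt.le⟩
  have hsub1 : Set.Ico (0:ℝ) x₀ ⊆ Set.Icc (0:ℝ) 1 := fun y hy =>
    ⟨hy.1, by have := hy.2; linarith⟩
  have hsub2 : Set.Ioc x₀ (1:ℝ) ⊆ Set.Icc (0:ℝ) 1 := fun y hy =>
    ⟨by have := hy.1; linarith, hy.2⟩
  have t1 : Tendsto (cantorF a q) (nhdsWithin x₀ (Set.Ico (0:ℝ) x₀))
      (nhds (cantorF a q x₀)) := hcont.mono_left (nhdsWithin_mono _ hsub1)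
  have t2 : Tendsto (cantorF a q) (nhdsWithin x₀ (Set.Ioc x₀ (1:ℝ)))
      (nhds (cantorF a q x₀)) := hcont.mono_left (nhdsWithin_mono _ hsub2)
  have e1 : S - 1 / (q:ℝ) ^ n + T = cantorF a q x₀ := tendsto_nhds_unique hLtend t1
  have e2 : S = cantorF a q x₀ := tendsto_nhds_unique hRtend t2
  have hpos : (0:ℝ) < 1 / (((q:ℝ) - 1) * (q:ℝ) ^ n) := by positivity
  linarith
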